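/- arXiv:2506.09415 — 3 statements merged into one kernel-verified Lean document; each statement's English description precedes it below -/
import Mathlib

section
/- The product vector w_1^⊥ ⊗ w_2^⊥ ∈ ℂ²⊗ℂ² satisfies ⟨w_1 ⊗ w_1, w_1^⊥ ⊗ w_2^⊥⟩ = 0, ⟨w_2 ⊗ w_2, w_1^⊥ ⊗ w_2^⊥⟩ = 0, and ⟨w_0 ⊗ w_0, w_1^⊥ ⊗ w_2^⊥⟩ = 3/4 ≠ 0; i.e., it is a product detecting state for w_0 ⊗ w_0 within the double-trine ensemble. -/
/-!
Statement 1: `w_1^⊥ ⊗ w_2^⊥` is a product detecting state for `w_0 ⊗ w_0`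
within the double-trine ensemble, with detection amplitude `3/4`.
-/

noncomputable section
open scoped ComplexInnerProductSpace

/-- The qubit Hilbert space `ℂ²`. -/
abbrev Qubit : Type := EuclideanSpace ℂ (Fin 2)

/-- The (Kronecker) tensor product of two vectors, realized in `EuclideanSpace ℂ (ι × κ)`. -/
def tp {ι κ : Type} (x : EuclideanSpace ℂ ι) (y : EuclideanSpace ℂ κ) :
    EuclideanSpace ℂ (ι × κ) :=
  (WithLp.equiv 2 (ι × κ → ℂ)).symm (fun p => x p.1 * y p.2)

/-- A qubit vector from its two coordinates. -/
def mk2 (a b : ℂ) : Qubit := (WithLp.equiv 2 (Fin 2 → ℂ)).symm ![a, b]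

/-- The trine states `w_k = cos(kπ/3)|0⟩ + sin(kπ/3)|1⟩`. -/
def w (k : Fin 3) : Qubit :=
  mk2 (Real.cos ((k : ℕ) * Real.pi / 3)) (Real.sin ((k : ℕ) * Real.pi / 3))

/-- The orthogonal trine states `w_k^⊥ = -sin(kπ/3)|0⟩ + cos(kπ/3)|1⟩`. -/
def wperp (k : Fin 3) : Qubit :=
  mk2 (-(Real.sin ((k : ℕ) * Real.pi / 3))) (Real.cos ((k : ℕ) * Real.pi / 3))

lemma inner_tp {ι κ : Type} [Fintype ι] [Fintype κ]
    (x u : EuclideanSpace ℂ ι) (y v : EuclideanSpace ℂ κ) :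
    ⟪tp x y, tp u v⟫ = ⟪x, u⟫ * ⟪y, v⟫ := by
  simp only [tp, PiLp.inner_apply, WithLp.equiv_symm_apply, PiLp.toLp_apply, RCLike.inner_apply,
    map_mul, Fintype.sum_prod_type]
  rw [Finset.sum_mul_sum]
  exact Finset.sum_congr rfl fun _ _ => Finset.sum_congr rfl fun _ _ => by ring

lemma inner_mk2 (a b c d : ℂ) :
    ⟪mk2 a b, mk2 c d⟫ = starRingEnd ℂ a * c + starRingEnd ℂ b * d := by
  simp [mk2, PiLp.inner_apply, Fin.sum_univ_two]
  ring

lemma cos23 : Real.cos (2 * Real.pi / 3) = -(1/2) := by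
  have : 2 * Real.pi / 3 = Real.pi - Real.pi / 3 := by ring
  rw [this, Real.cos_pi_sub, Real.cos_pi_div_three]

lemma sin23 : Real.sin (2 * Real.pi / 3) = Real.sqrt 3 / 2 := by
  have : 2 * Real.pi / 3 = Real.pi - Real.pi / 3 := by ring
  rw [this, Real.sin_pi_sub, Real.sin_pi_div_three]

/-- `⟨w_1⊗w_1, w_1^⊥⊗w_2^⊥⟩ = 0`, `⟨w_2⊗w_2, w_1^⊥⊗w_2^⊥⟩ = 0`, and
`⟨w_0⊗w_0, w_1^⊥⊗w_2^⊥⟩ = 3/4 ≠ 0`. -/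
theorem double_trine_detecting_w0 :
    ⟪tp (w 1) (w 1), tp (wperp 1) (wperp 2)⟫ = 0 ∧
    ⟪tp (w 2) (w 2), tp (wperp 1) (wperp 2)⟫ = 0 ∧
    ⟪tp (w 0) (w 0), tp (wperp 1) (wperp 2)⟫ = (3 / 4 : ℂ) ∧
    ⟪tp (w 0) (w 0), tp (wperp 1) (wperp 2)⟫ ≠ 0 := by
  have h3 : (Real.sqrt 3 : ℂ) * (Real.sqrt 3 : ℂ) = 3 := by
    rw [← Complex.ofReal_mul, Real.mul_self_sqrt (by norm_num)]
    norm_num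
  have harg1 : ((1 : Fin 3) : ℕ) * Real.pi / 3 = Real.pi / 3 := by norm_num
  have harg2 : ((2 : Fin 3) : ℕ) * Real.pi / 3 = 2 * Real.pi / 3 := by norm_num
  have harg0 : ((0 : Fin 3) : ℕ) * Real.pi / 3 = 0 := by norm_num
  have key : ∀ p : Prop, (p → p) := fun _ h => h
  have main : ⟪tp (w 0) (w 0), tp (wperp 1) (wperp 2)⟫ = (3 / 4 : ℂ) := by
    simp only [inner_tp, w, wperp, inner_mk2, harg0, harg1, harg2,
      Real.cos_zero, Real.sin_zero, Real.cos_pi_div_three, Real.sin_pi_div_three,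
      cos23, sin23]
    push_cast
    simp only [map_neg, map_div₀, Complex.conj_ofReal, map_one, map_ofNat]
    ring_nf
    simp only [map_zero]
    rw [sq]
    linear_combination h3 / 4
  refine ⟨?_, ?_, main, by rw [main]; norm_num⟩ <;>
  · simp only [inner_tp, w, wperp, inner_mk2, harg0, harg1, harg2,
      Real.cos_zero, Real.sin_zero, Real.cos_pi_div_three, Real.sin_pi_div_three,
      cos23, sin23]
    push_cast
    simp only [map_neg, map_div₀, Complex.conj_ofReal, map_one, map_ofNat]
    ring
end
end

section
/- Let N and m be positive integers with m ≤ N, and let v : Fin N → V be a family of vectors that is NOT linearly independent. Then the family of m-CLSM states, i.e., the family indexed by injective maps p : Fin m → Fin N whose member at p is v_p = v(p 0) ⊗ v(p 1) ⊗ ⋯ ⊗ v(p(m−1)) ∈ V^{⊗m}, is not linearly independent. (Proposition 2: for any linearly dependent set of multipartite quantum states, the m-CLSM task is impossible for every m, since linear independence is necessary for conclusive discrimination.) -/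
/-!
Statement 3 (Proposition 2): If `v : Fin N → V` is a linearly dependent family
(`1 ≤ m ≤ N`), then the family of `m`-CLSM states
`p ↦ v (p 0) ⊗ v (p 1) ⊗ ⋯ ⊗ v (p (m-1))`, indexed by injective `p : Fin m → Fin N`,
is linearly dependent as well.
-/

open scoped TensorProduct
open PiTensorProduct

/-- The `m`-CLSM family built from a family `v`: for each injective tuple
`p : Fin m → ι` of indices, the tensor product `v (p 0) ⊗ ⋯ ⊗ v (p (m-1))`
in the `m`-fold tensor power of `V`. -/
noncomputable def clsmFamily {V : Type*} [AddCommGroup V] [Module ℂ V] {ι : Type*} (m : ℕ)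
    (v : ι → V) (p : {p : Fin m → ι // Function.Injective p}) :
    ⨂[ℂ] _ : Fin m, V :=
  ⨂ₜ[ℂ] i, v (p.1 i)

/-- For a linearly dependent family, the `m`-CLSM family is linearly dependent
for every `1 ≤ m ≤ N`. -/
theorem clsm_of_linearDependent_not_linearIndependent
    {V : Type*} [AddCommGroup V] [Module ℂ V] {N m : ℕ}
    (hN : 0 < N) (hm : 0 < m) (hmN : m ≤ N)
    (v : Fin N → V) (hv : ¬ LinearIndependent ℂ v) :
    ¬ LinearIndependent ℂ (clsmFamily (V := V) m v) := by
  classical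
  obtain ⟨m', rfl⟩ : ∃ m', m = m' + 1 := ⟨m - 1, by omega⟩
  rw [Fintype.not_linearIndependent_iff] at hv
  obtain ⟨c, hc0, j, hcj⟩ := hv
  -- an injective tuple `q` of length `m'` avoiding `j`
  have hq1 : ∀ t : Fin m', (t : ℕ) < N := fun t => by have := t.isLt; omega
  have hq2 : ∀ t : Fin m', (t : ℕ) + 1 < N := fun t => by have := t.isLt; omega
  set q : Fin m' → Fin N := fun t => if (t : ℕ) < (j : ℕ) then ⟨t, hq1 t⟩ else ⟨t + 1, hq2 t⟩
    with hqdef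
  have hqj : ∀ t, q t ≠ j := by
    intro t
    simp only [hqdef]
    split_ifs with h <;> (intro he; rw [Fin.ext_iff] at he; simp at he; omega)
  have hqinj : Function.Injective q := by
    intro a b hab
    simp only [hqdef] at hab
    rw [Fin.ext_iff]
    split_ifs at hab <;> rw [Fin.ext_iff] at hab <;> simp at hab <;> omega
  have hpinj : ∀ i : Fin N, (∀ t, q t ≠ i) →
      Function.Injective (Fin.cons i q : Fin (m' + 1) → Fin N) := by
    intro i hi
    rw [Fin.cons_injective_iff]
    exact ⟨fun ⟨t, ht⟩ => hi t ht, hqinj⟩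
  -- the alternatization of the tensor product map
  set T : MultilinearMap ℂ (fun _ : Fin (m' + 1) => V) (⨂[ℂ] _ : Fin (m' + 1), V) :=
    PiTensorProduct.tprod ℂ with hTdef
  set F := MultilinearMap.alternatization T with hFdef
  set w : Fin N → (Fin (m' + 1) → V) := fun i => Fin.cons (v i) (v ∘ q) with hwdef
  have hwcons : ∀ i, w i = v ∘ Fin.cons i q := by
    intro i
    funext k
    refine Fin.cases rfl (fun t => rfl) k
  -- F vanishes on repeated tuples
  have hFzero : ∀ i : Fin N, ¬ (∀ t, q t ≠ i) → F (w i) = 0 := by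
    intro i hi
    push_neg at hi
    obtain ⟨t, ht⟩ := hi
    refine F.map_eq_zero_of_eq (w i) (i := 0) (j := t.succ) ?_ (Fin.succ_ne_zero t).symm
    simp [hwdef, ht]
  -- expansion of F on cons tuples
  have hFexp : ∀ i : Fin N, F (w i) =
      ∑ σ : Equiv.Perm (Fin (m' + 1)),
        ((Equiv.Perm.sign σ : ℤ) : ℂ) • (⨂ₜ[ℂ] k, v ((Fin.cons i q : Fin (m' + 1) → Fin N) (σ k))) := by
    intro i
    rw [hFdef, MultilinearMap.alternatization_apply]
    refine Finset.sum_congr rfl fun σ _ => ?_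
    rw [Units.smul_def, ← Int.cast_smul_eq_zsmul ℂ]
    congr 1
    rw [MultilinearMap.domDomCongr_apply, hTdef]
    congr 1
    funext k
    rw [hwcons i]
    rfl
  -- the total linear combination is zero
  have hsum0 : ∑ i : Fin N, c i • F (w i) = 0 := by
    have hup : ∀ x : V, (Fin.cons x (v ∘ q) : Fin (m' + 1) → V) =
        Function.update (Fin.cons (0 : V) (v ∘ q) : Fin (m' + 1) → V) 0 x := by
      intro x; rw [Fin.update_cons_zero]
    calc ∑ i : Fin N, c i • F (w i)
        = ∑ i : Fin N, F (Function.update (Fin.cons 0 (v ∘ q)) 0 (c i • v i)) := by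
          refine Finset.sum_congr rfl fun i _ => ?_
          rw [F.map_update_smul, ← hup]
      _ = F (Function.update (Fin.cons 0 (v ∘ q)) 0 (∑ i : Fin N, c i • v i)) := by
          rw [F.map_update_sum]
      _ = 0 := by rw [hc0]; exact F.map_update_zero _ _
  -- uniqueness for the distinguished tuple
  have huniq : ∀ (i : Fin N) (σ : Equiv.Perm (Fin (m' + 1))), (∀ t, q t ≠ i) →
      Fin.cons i q ∘ ⇑σ = Fin.cons j q → i = j ∧ σ = 1 := by
    intro i σ hi h
    have h0 := congrFun h 0
    simp only [Function.comp_apply, Fin.cons_zero] at h0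
    have hij : i = j := by
      rcases Fin.eq_zero_or_eq_succ (σ 0) with h1 | ⟨t, ht⟩
      · rw [h1, Fin.cons_zero] at h0; exact h0
      · rw [ht, Fin.cons_succ] at h0; exact absurd h0 (hqj t)
    subst hij
    refine ⟨rfl, Equiv.ext fun k => ?_⟩
    have := congrFun h k
    simp only [Function.comp_apply] at this
    exact hpinj i hi this
  rw [Fintype.not_linearIndependent_iff]
  refine ⟨fun p => ∑ i : Fin N, ∑ σ : Equiv.Perm (Fin (m' + 1)),
    if (∀ t, q t ≠ i) ∧ Fin.cons i q ∘ ⇑σ = p.1 then c i * ((Equiv.Perm.sign σ : ℤ) : ℂ) else 0,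
    ?_, ⟨Fin.cons j q, hpinj j hqj⟩, ?_⟩
  · -- the linear relation
    have step1 : ∀ i : Fin N, ∀ σ : Equiv.Perm (Fin (m' + 1)),
        (∑ p : {p : Fin (m' + 1) → Fin N // Function.Injective p},
          (if (∀ t, q t ≠ i) ∧ Fin.cons i q ∘ ⇑σ = p.1 then
            c i * ((Equiv.Perm.sign σ : ℤ) : ℂ) else 0) • clsmFamily (m' + 1) v p) =
        if hcnd : ∀ t, q t ≠ i then
          (c i * ((Equiv.Perm.sign σ : ℤ) : ℂ)) •
            clsmFamily (m' + 1) v ⟨Fin.cons i q ∘ ⇑σ, (hpinj i hcnd).comp σ.injective⟩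
        else 0 := by
      intro i σ
      split_ifs with hcnd
      · rw [Finset.sum_eq_single ⟨Fin.cons i q ∘ ⇑σ, (hpinj i hcnd).comp σ.injective⟩]
        · rw [if_pos ⟨hcnd, rfl⟩]
        · intro p _ hne
          rw [if_neg, zero_smul]
          rintro ⟨-, hp⟩
          exact hne (Subtype.ext hp.symm)
        · intro h; exact absurd (Finset.mem_univ _) h
      · refine Finset.sum_eq_zero fun p _ => ?_
        rw [if_neg, zero_smul]
        rintro ⟨h1, -⟩
        exact hcnd h1
    calc (∑ p : {p : Fin (m' + 1) → Fin N // Function.Injective p},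
          (∑ i : Fin N, ∑ σ : Equiv.Perm (Fin (m' + 1)),
            if (∀ t, q t ≠ i) ∧ Fin.cons i q ∘ ⇑σ = p.1 then
              c i * ((Equiv.Perm.sign σ : ℤ) : ℂ) else 0) • clsmFamily (m' + 1) v p)
        = ∑ i : Fin N, ∑ σ : Equiv.Perm (Fin (m' + 1)),
            ∑ p : {p : Fin (m' + 1) → Fin N // Function.Injective p},
            (if (∀ t, q t ≠ i) ∧ Fin.cons i q ∘ ⇑σ = p.1 then
              c i * ((Equiv.Perm.sign σ : ℤ) : ℂ) else 0) • clsmFamily (m' + 1) v p := by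
          simp_rw [Finset.sum_smul]
          rw [Finset.sum_comm]
          exact Finset.sum_congr rfl fun i _ => Finset.sum_comm
      _ = ∑ i : Fin N, c i • F (w i) := by
          refine Finset.sum_congr rfl fun i _ => ?_
          by_cases hcnd : ∀ t, q t ≠ i
          · rw [hFexp i, Finset.smul_sum]
            refine Finset.sum_congr rfl fun σ _ => ?_
            rw [step1 i σ, dif_pos hcnd, smul_smul]
            rfl
          · rw [hFzero i hcnd, smul_zero]
            refine Finset.sum_eq_zero fun σ _ => ?_
            rw [step1 i σ, dif_neg hcnd]
      _ = 0 := hsum0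
  · -- nonzero coefficient at `Fin.cons j q`
    have : (∑ i : Fin N, ∑ σ : Equiv.Perm (Fin (m' + 1)),
        if (∀ t, q t ≠ i) ∧ Fin.cons i q ∘ ⇑σ = Fin.cons j q then
          c i * ((Equiv.Perm.sign σ : ℤ) : ℂ) else 0) = c j := by
      rw [Finset.sum_eq_single j]
      · rw [Finset.sum_eq_single (1 : Equiv.Perm (Fin (m' + 1)))]
        · rw [if_pos ⟨hqj, by ext k; simp⟩]
          simp
        · intro σ _ hσ
          rw [if_neg]
          rintro ⟨h1, h2⟩
          exact hσ (huniq j σ h1 h2).2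
        · intro h; exact absurd (Finset.mem_univ _) h
      · intro i _ hij
        refine Finset.sum_eq_zero fun σ _ => ?_
        rw [if_neg]
        rintro ⟨h1, h2⟩
        exact hij (huniq i σ h1 h2).1
      · intro h; exact absurd (Finset.mem_univ _) h
    exact fun h0 => hcj (this.symm.trans h0)
end

section
/- The 12 vectors ξ_{ij} (i, j ∈ {1,2,3,4}, i ≠ j) are linearly independent in (ℂ²⊗ℂ²) ⊗ (ℂ²⊗ℂ²) ≅ ℂ^16; hence the 2-CLSM set S^D_{(2)} of the Duan ensemble is conclusively distinguishable by global measurements. -/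
/-!
Statement 13: The 12 vectors ξ_{ij} = (d^i_A ⊗ d^j_A) ⊗ (d^i_B ⊗ d^j_B) (i ≠ j) are
linearly independent in (ℂ²⊗ℂ²) ⊗ (ℂ²⊗ℂ²) ≅ ℂ¹⁶; hence the 2-CLSM set S^D_{(2)} of the
Duan ensemble is conclusively distinguishable by global measurements.
-/

noncomputable section
open scoped ComplexInnerProductSpace

/-- `1/√2` in `ℂ`. -/
def c2 : ℂ := ((Real.sqrt 2 : ℂ))⁻¹

/-- Alice's Duan states `|0⟩, |1⟩, |+⟩, |i₊⟩` (indexed by `Fin 4`). -/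
def dA : Fin 4 → Qubit :=
  ![mk2 1 0, mk2 0 1, mk2 c2 c2, mk2 c2 (c2 * Complex.I)]

/-- Bob's Duan states `|0⟩, |1⟩, |+⟩, |i₋⟩` (indexed by `Fin 4`). -/
def dB : Fin 4 → Qubit :=
  ![mk2 1 0, mk2 0 1, mk2 c2 c2, mk2 c2 (-(c2 * Complex.I))]

/-- The 2-CLSM vectors `ξ_{ij} = (d^i_A ⊗ d^j_A) ⊗ (d^i_B ⊗ d^j_B)`, the first `ℂ⁴`
factor being Alice's system and the second Bob's. -/
def ξ (i j : Fin 4) : EuclideanSpace ℂ ((Fin 2 × Fin 2) × (Fin 2 × Fin 2)) :=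
  tp (tp (dA i) (dA j)) (tp (dB i) (dB j))


/-- Dual coefficient table: `W k` is the dual functional (on `ℂ² ⊗ ℂ²`-coordinates `(a,c)`)
to the family `(a,c) ↦ dA i a * dB i c`. -/
def W : Fin 4 → Fin 2 → Fin 2 → ℂ :=
  ![![![1, (-1 - Complex.I)/2], ![(-1 + Complex.I)/2, 0]],
    ![![0, (-1 - Complex.I)/2], ![(-1 + Complex.I)/2, 1]],
    ![![0, 1], ![1, 0]],
    ![![0, Complex.I], ![-Complex.I, 0]]]

lemma c2_sq : c2 * c2 = 2⁻¹ := by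
  rw [c2, ← mul_inv, ← Complex.ofReal_mul, Real.mul_self_sqrt (by norm_num)]
  norm_num

lemma tp_apply {ι κ : Type} (x : EuclideanSpace ℂ ι) (y : EuclideanSpace ℂ κ) (p : ι × κ) :
    tp x y p = x p.1 * y p.2 := rfl

lemma mk2_apply (a b : ℂ) (i : Fin 2) : mk2 a b i = ![a, b] i := rfl

lemma F_eq (k i : Fin 4) :
    (∑ a : Fin 2, ∑ c : Fin 2, W k a c * (dA i a * dB i c)) = if k = i then 1 else 0 := by
  fin_cases k <;> fin_cases i <;>
    simp [W, dA, dB, mk2_apply, Fin.sum_univ_two] <;>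
    ring_nf <;>
    simp [Complex.I_sq, sq, c2_sq]

/-- Dual linear map sending `ξ i j` to the standard basis vector at `(i,j)`. -/
def Tmap : EuclideanSpace ℂ ((Fin 2 × Fin 2) × (Fin 2 × Fin 2)) →ₗ[ℂ] ((Fin 4 × Fin 4) → ℂ) where
  toFun x := fun q => ∑ a : Fin 2, ∑ c : Fin 2, ∑ b : Fin 2, ∑ d : Fin 2,
    W q.1 a c * W q.2 b d * x ((a, b), (c, d))
  map_add' x y := by
    funext q
    simp [Finset.sum_add_distrib, mul_add, PiLp.add_apply]
  map_smul' m x := by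
    funext q
    simp [Finset.mul_sum, PiLp.smul_apply, smul_eq_mul]
    ring_nf

lemma T_xi (i j : Fin 4) : Tmap (ξ i j) = Pi.single (i, j) (1 : ℂ) := by
  funext q
  obtain ⟨k, l⟩ := q
  have : Tmap (ξ i j) (k, l)
      = (∑ a : Fin 2, ∑ c : Fin 2, W k a c * (dA i a * dB i c))
        * (∑ b : Fin 2, ∑ d : Fin 2, W l b d * (dA j b * dB j d)) := by
    have hfac : ∀ f g : Fin 2 → Fin 2 → ℂ,
        (∑ a, ∑ c, f a c) * (∑ b, ∑ d, g b d)
          = ∑ a : Fin 2, ∑ c : Fin 2, ∑ b : Fin 2, ∑ d : Fin 2, f a c * g b d := by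
      intro f g
      simp [Finset.sum_mul, Finset.mul_sum, Fin.sum_univ_two]; ring
    rw [hfac]
    simp only [Tmap, LinearMap.coe_mk, AddHom.coe_mk, ξ, tp_apply]
    refine Finset.sum_congr rfl fun a _ => Finset.sum_congr rfl fun c _ =>
      Finset.sum_congr rfl fun b _ => Finset.sum_congr rfl fun d _ => by ring
  rw [this, F_eq, F_eq]
  by_cases hk : k = i <;> by_cases hl : l = j <;>
    simp [hk, hl, Pi.single_apply, Prod.ext_iff]

lemma full_li : LinearIndependent ℂ (fun q : Fin 4 × Fin 4 => ξ q.1 q.2) := by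
  apply LinearIndependent.of_comp Tmap
  have h : (⇑Tmap ∘ fun q : Fin 4 × Fin 4 => ξ q.1 q.2)
      = fun q : Fin 4 × Fin 4 => Pi.single q (1 : ℂ) :=
    funext fun q => T_xi q.1 q.2
  rw [h]
  rw [Fintype.linearIndependent_iff]
  intro g hg q
  have := congrFun hg q
  simpa [Pi.single_apply, Finset.sum_apply] using this

/-- The 12 vectors `ξ_{ij}` (`i ≠ j`) are linearly independent. -/
theorem duan_2CLSM_linearly_independent :
    LinearIndependent ℂ (fun p : {p : Fin 4 × Fin 4 // p.1 ≠ p.2} => ξ p.1.1 p.1.2) := by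
  exact full_li.comp Subtype.val Subtype.val_injective
end
end
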